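/- Let p be an odd prime, let A = 𝔽_p[ξ₁, ξ₂, …] be the polynomial ring over ZMod p in variables ξ(k) for k ≥ 1, and set ξ(0) = 1. Define the conjugates ξ̄ : ℕ → A recursively by ξ̄(0) = 1 and, for k ≥ 1, ∑_{j=0}^{k} ξ(k−j)^{p^j} · ξ̄(j) = 0 (Milnor's antipode recursion). Define t : ℕ → A by t(n) = ξ(k) if n = p^k − 1 for some k ≥ 1, and t(n) = 0 otherwise, and let N be the Newton sequence of t. Then for every k ≥ 1, N(p^k − 1) = −ξ̄(k). -/

import Mathlib

open Finset

/-- The Newton sequence of a sequence `t : ℕ → R`: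
`N 0 = 0`, `N 1 = t 1`, and for `n ≥ 2`,
`N n = (∑_{k=1}^{n-1} (-1)^(k-1) * t k * N (n-k)) + (-1)^(n-1) * n * t n`. -/
noncomputable def newton {R : Type*} [CommRing R] (t : ℕ → R) : ℕ → R
  | 0 => 0
  | 1 => t 1
  | n + 2 =>
      (∑ k ∈ (Finset.Icc 1 (n + 1)).attach,
        (-1 : R) ^ ((k : ℕ) - 1) * t (k : ℕ) * newton t (n + 2 - (k : ℕ)))
      + (-1 : R) ^ (n + 1) * ((n + 2 : ℕ) : R) * t (n + 2)
decreasing_by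
  have hk := k.2
  simp only [Finset.mem_Icc] at hk
  omega

lemma newton_succ_succ {R : Type*} [CommRing R] (t : ℕ → R) (n : ℕ) : newton t (n+2) =
      (∑ k ∈ (Finset.Icc 1 (n + 1)),
        (-1 : R) ^ (k - 1) * t k * newton t (n + 2 - k))
      + (-1 : R) ^ (n + 1) * ((n + 2 : ℕ) : R) * t (n + 2) := by
  rw [newton]
  congr 1
  exact Finset.sum_attach (Finset.Icc 1 (n+1)) (fun k => (-1:R)^(k-1) * t k * newton t (n+2-k))

lemma coeff_pow_prime_char {R : Type*} [CommRing R] {p : ℕ} (hp : p.Prime) [CharP R p]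
    (g : PowerSeries R) (n : ℕ) :
    PowerSeries.coeff (p * n) (g ^ p) = (PowerSeries.coeff n g) ^ p := by
  haveI := Fact.mk hp
  set h : Polynomial R := PowerSeries.trunc (p * n + 1) g with hh
  have hdvd : (PowerSeries.X : PowerSeries R) ^ (p * n + 1) ∣ g - (h : PowerSeries R) := by
    rw [PowerSeries.X_pow_dvd_iff]
    intro m hm
    rw [map_sub, sub_eq_zero, hh]
    exact (PowerSeries.coeff_coe_trunc_of_lt hm).symm
  have hdvd2 : (PowerSeries.X : PowerSeries R) ^ (p * n + 1) ∣ g ^ p - (h : PowerSeries R) ^ p :=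
    hdvd.trans (sub_dvd_pow_sub_pow g (h : PowerSeries R) p)
  have hcoeff : PowerSeries.coeff (p * n) (g ^ p)
      = PowerSeries.coeff (p * n) ((h : PowerSeries R) ^ p) := by
    rw [PowerSeries.X_pow_dvd_iff] at hdvd2
    have := hdvd2 (p * n) (Nat.lt_succ_self _)
    rw [map_sub, sub_eq_zero] at this
    exact this
  rw [hcoeff, ← Polynomial.coe_pow, Polynomial.coeff_coe]
  rw [← Polynomial.map_frobenius_expand (p := p) (f := h), Polynomial.coeff_map, Polynomial.coeff_expand hp.pos,
    if_pos ⟨n, rfl⟩, Nat.mul_div_cancel_left n hp.pos, frobenius_def]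
  congr 1
  have : n < p * n + 1 := by nlinarith [hp.two_le]
  rw [hh, ← PowerSeries.coeff_coe_trunc_of_lt this, Polynomial.coeff_coe]

lemma swap_recursion {R : Type*} [CommRing R] {p : ℕ} (hp : p.Prime) [CharP R p]
    (ξ ξbar : ℕ → R) (hξ0 : ξ 0 = 1) (hξbar0 : ξbar 0 = 1)
    (hrec : ∀ k : ℕ, 1 ≤ k → ∑ j ∈ Finset.range (k+1), ξ (k - j) ^ (p ^ j) * ξbar j = 0) :
    ∀ k : ℕ, 1 ≤ k → ∑ j ∈ Finset.range (k+1), ξ j * ξbar (k - j) ^ (p ^ j) = 0 := by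
  haveI := Fact.mk hp
  intro k
  induction k using Nat.strong_induction_on with
  | _ k IH =>
    intro hk1
    set F : ℕ → ℕ → R := fun l i => ξ l * (ξ ((k-l)-i) ^ (p^i) * ξbar i) ^ (p^l) with hF
    have claim1 : ∑ m ∈ range (k+1), ξ (k-m)^(p^m) *
        (∑ j ∈ range (m+1), ξ j * ξbar (m - j) ^ (p ^ j)) = ξ k := by
      have step1 : ∑ m ∈ range (k+1), ξ (k-m)^(p^m) *
          (∑ j ∈ range (m+1), ξ j * ξbar (m - j) ^ (p ^ j))
          = ∑ m ∈ range (k+1), ∑ j ∈ range (m+1), F j (m - j) := by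
        refine Finset.sum_congr rfl fun m hm => ?_
        rw [Finset.mul_sum]
        refine Finset.sum_congr rfl fun j hj => ?_
        simp only [Finset.mem_range, Nat.lt_succ_iff] at hm hj
        have h1 : (k - j) - (m - j) = k - m := by omega
        have h3 : (m - j) + j = m := by omega
        rw [hF]
        simp only []
        rw [h1, mul_pow, ← pow_mul, ← pow_add, h3]
        ring
      have step2 : ∑ m ∈ range (k+1), ∑ j ∈ range (m+1), F j (m - j)
          = ∑ l ∈ range (k+1), ∑ i ∈ range (k+1-l), F l i := by
        rw [Finset.sum_sigma' (range (k+1)) (fun m => range (m+1))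
            (fun m j => F j (m - j)),
          Finset.sum_sigma' (range (k+1)) (fun l => range (k+1-l)) (fun l i => F l i)]
        refine Finset.sum_bij' (fun q _ => (⟨q.2, q.1 - q.2⟩ : Σ _ : ℕ, ℕ))
          (fun q _ => (⟨q.1 + q.2, q.1⟩ : Σ _ : ℕ, ℕ)) ?_ ?_ ?_ ?_ ?_
        · rintro ⟨m, j⟩ hq
          simp only [Finset.mem_sigma, Finset.mem_range, Nat.lt_succ_iff] at hq ⊢
          omega
        · rintro ⟨l, i⟩ hq
          simp only [Finset.mem_sigma, Finset.mem_range, Nat.lt_succ_iff] at hq ⊢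
          omega
        · rintro ⟨m, j⟩ hq
          simp only [Finset.mem_sigma, Finset.mem_range, Nat.lt_succ_iff] at hq
          simp only [Sigma.mk.inj_iff, heq_eq_eq]
          exact ⟨by omega, trivial⟩
        · rintro ⟨l, i⟩ hq
          simp only [Finset.mem_sigma, Finset.mem_range, Nat.lt_succ_iff] at hq
          simp only [Sigma.mk.inj_iff, heq_eq_eq]
          exact ⟨trivial, by omega⟩
        · rintro ⟨m, j⟩ hq; rfl
      have step3 : ∀ l ∈ range (k+1), ∑ i ∈ range (k+1-l), F l i
          = if l = k then ξ k else 0 := by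
        intro l hl
        simp only [Finset.mem_range, Nat.lt_succ_iff] at hl
        have hrng : k + 1 - l = (k - l) + 1 := by omega
        have hinner : ∑ i ∈ range (k+1-l), F l i
            = ξ l * (iterateFrobenius R p l
                (∑ i ∈ range ((k-l)+1), ξ ((k-l)-i) ^ (p^i) * ξbar i)) := by
          rw [hrng, map_sum, Finset.mul_sum]
          refine Finset.sum_congr rfl fun i hi => ?_
          rw [hF]; simp only [iterateFrobenius_def]
        by_cases hlk : l = k
        · subst hlk
          rw [if_pos rfl, hinner]
          simp [hξ0, hξbar0]
        · rw [if_neg hlk, hinner, hrec (k - l) (by omega), map_zero, mul_zero]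
      rw [step1, step2, Finset.sum_congr rfl step3,
        Finset.sum_ite_eq' (range (k+1)) k (fun _ => ξ k),
        if_pos (Finset.self_mem_range_succ k)]
    rw [Finset.sum_range_succ] at claim1
    have hzero : ∑ m ∈ range k, ξ (k-m)^(p^m) *
        (∑ j ∈ range (m+1), ξ j * ξbar (m - j) ^ (p ^ j)) = ξ k := by
      rw [Finset.sum_eq_single 0]
      · simp [hξ0, hξbar0]
      · intro m hm hm0
        rw [IH m (Finset.mem_range.mp hm) (Nat.one_le_iff_ne_zero.mpr hm0), mul_zero]
      · intro h; exact absurd (Finset.mem_range.mpr hk1) h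
    rw [hzero, Nat.sub_self, hξ0, one_pow, one_mul] at claim1
    linear_combination claim1


theorem newton_aux {R : Type*} [CommRing R] (p : ℕ) (hp : p.Prime) (hodd : Odd p) [CharP R p]
    (ξ : ℕ → R) (hξ0 : ξ 0 = 1)
    (ξbar : ℕ → R) (hξbar0 : ξbar 0 = 1)
    (hξbar : ∀ k : ℕ, 1 ≤ k →
      ∑ j ∈ Finset.range (k + 1), ξ (k - j) ^ (p ^ j) * ξbar j = 0)
    (t : ℕ → R)
    (ht1 : ∀ k : ℕ, 1 ≤ k → t (p ^ k - 1) = ξ k)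
    (ht0 : ∀ n : ℕ, (∀ k : ℕ, 1 ≤ k → n ≠ p ^ k - 1) → t n = 0) :
    ∀ k : ℕ, 1 ≤ k → newton t (p ^ k - 1) = - ξbar k := by
  classical
  haveI := Fact.mk hp
  have hp2 : 2 ≤ p := hp.two_le
  have hpne2 : p ≠ 2 := by
    rintro rfl
    exact (by norm_num : ¬ Odd 2) hodd
  have hp3 : 3 ≤ p := by omega
  have hpk3 : ∀ k : ℕ, 1 ≤ k → 3 ≤ p ^ k := by
    intro k hk
    calc 3 ≤ p := hp3
    _ ≤ p ^ k := Nat.le_self_pow (by omega) p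
  have ht1' : t 1 = 0 := by
    apply ht0
    intro k hk h
    have := hpk3 k hk
    omega
  -- (n+1) * t n = 0 in R
  have hdead : ∀ n : ℕ, ((n + 1 : ℕ) : R) * t n = 0 := by
    intro n
    by_cases h : ∀ k, 1 ≤ k → n ≠ p ^ k - 1
    · rw [ht0 n h, mul_zero]
    · push_neg at h
      obtain ⟨k, hk, rfl⟩ := h
      have h3 := hpk3 k hk
      have h1 : p ^ k - 1 + 1 = p ^ k := by omega
      rw [h1]
      have hz : ((p ^ k : ℕ) : R) = 0 := by
        rw [Nat.cast_pow, CharP.cast_eq_zero R p, zero_pow (by omega)]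
      rw [hz, zero_mul]
  -- the series V and E
  set V : PowerSeries R := PowerSeries.mk (fun n => if n ≤ 1 then 0 else t n) with hV
  set E : PowerSeries R := 1 + V with hE
  have coeffV : ∀ n, PowerSeries.coeff n V = if n ≤ 1 then 0 else t n := by
    intro n; rw [hV, PowerSeries.coeff_mk]
  have coeffV' : ∀ n, 1 ≤ n → PowerSeries.coeff n V = t n := by
    intro n hn
    rw [coeffV]
    rcases Nat.lt_or_ge n 2 with h | h
    · have : n = 1 := by omega
      subst this; rw [if_pos le_rfl, ht1']
    · rw [if_neg (by omega)]
  have coeffE : ∀ n, PowerSeries.coeff n E = if n = 0 then 1 else t n := by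
    intro n
    rw [hE, map_add, PowerSeries.coeff_one, coeffV]
    match n with
    | 0 => simp
    | 1 => simp [ht1']
    | (n+2) => simp
  have hsupp : ∀ n, PowerSeries.coeff n V ≠ 0 → ∃ k, 1 ≤ k ∧ n = p ^ k - 1 := by
    intro n hn
    by_contra h
    push_neg at h
    apply hn
    rw [coeffV]
    split
    · rfl
    · exact ht0 n (fun k hk => h k hk)
  have hVs : ∀ s n : ℕ, n < 2 * s → PowerSeries.coeff n (V ^ s) = 0 := by
    intro s n h
    have hdvd : (PowerSeries.X : PowerSeries R) ^ (2 * s) ∣ V ^ s := by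
      rw [pow_mul]
      apply pow_dvd_pow_of_dvd
      rw [PowerSeries.X_pow_dvd_iff]
      intro m hm
      rw [coeffV, if_pos (by omega)]
    rw [PowerSeries.X_pow_dvd_iff] at hdvd
    exact hdvd n h
  -- the inverse coefficients
  set a : ℕ → R := fun n => ∑ s ∈ range (n+1), (-1 : R)^s * PowerSeries.coeff n (V ^ s)
    with ha
  have ha0 : a 0 = 1 := by
    rw [ha]
    simp
  have hstable : ∀ n N : ℕ, n ≤ N →
      ∑ s ∈ range (N+1), (-1 : R)^s * PowerSeries.coeff n (V ^ s) = a n := by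
    intro n N h
    rw [ha]
    symm
    apply Finset.sum_subset
    · exact Finset.range_subset_range.mpr (by omega)
    · intro s _ hs
      rw [Finset.mem_range, Nat.lt_succ_iff, not_le] at hs
      rw [hVs s n (by omega), mul_zero]
  set A : PowerSeries R := PowerSeries.mk a with hA
  have hcoeffA : ∀ j, PowerSeries.coeff j A = a j := by
    intro j; rw [hA, PowerSeries.coeff_mk]
  have hEA : ∀ n, PowerSeries.coeff n (E * A) = if n = 0 then 1 else 0 := by
    intro n
    set F : PowerSeries R := ∑ i ∈ range (n+1), (-V)^i with hF
    have hgeom : F * E = 1 - (-V)^(n+1) := by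
      have hg := geom_sum_mul (-V) (n+1)
      calc F * E = -(F * (-V - 1)) := by rw [hE]; ring
      _ = -((-V)^(n+1) - 1) := by rw [hF, hg]
      _ = 1 - (-V)^(n+1) := by ring
    have hcoeffF : ∀ j, j ≤ n → PowerSeries.coeff j F = a j := by
      intro j hj
      rw [hF, map_sum, ← hstable j n hj]
      refine Finset.sum_congr rfl fun i _ => ?_
      rw [neg_pow, show ((-1 : PowerSeries R))^i = PowerSeries.C ((-1 : R)^i) by
          rw [map_pow, map_neg, map_one], PowerSeries.coeff_C_mul]
    have hcoeff_eq : PowerSeries.coeff n (E * A) = PowerSeries.coeff n (E * F) := by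
      rw [PowerSeries.coeff_mul, PowerSeries.coeff_mul]
      refine Finset.sum_congr rfl fun q hq => ?_
      rw [Finset.HasAntidiagonal.mem_antidiagonal] at hq
      have hq2 : q.2 ≤ n := by omega
      rw [hcoeffA, hcoeffF q.2 hq2]
    rw [hcoeff_eq, mul_comm, hgeom, map_sub,
      neg_pow, show ((-1 : PowerSeries R))^(n+1) = PowerSeries.C ((-1 : R)^(n+1)) by
        rw [map_pow, map_neg, map_one], PowerSeries.coeff_C_mul,
      hVs (n+1) n (by omega), mul_zero, sub_zero, PowerSeries.coeff_one]
  -- the convolution recursion for a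
  have hconv : ∀ n : ℕ, 1 ≤ n → a n = - ∑ m ∈ Icc 1 n, t m * a (n - m) := by
    intro n hn
    have h0 := hEA n
    rw [if_neg (by omega), PowerSeries.coeff_mul,
      Finset.Nat.sum_antidiagonal_eq_sum_range_succ_mk, Finset.sum_range_succ'] at h0
    simp only [hcoeffA, Nat.sub_zero] at h0
    rw [coeffE, if_pos rfl, one_mul] at h0
    have hIcc : ∑ m ∈ Icc 1 n, t m * a (n - m)
        = ∑ i ∈ range n, PowerSeries.coeff (i+1) E * a (n-(i+1)) := by
      rw [← Finset.Ico_add_one_right_eq_Icc, Finset.sum_Ico_eq_sum_range]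
      refine Finset.sum_congr (by congr 1) fun i _ => ?_
      rw [coeffE, if_neg (by omega), add_comm 1 i]
    rw [hIcc]
    linear_combination h0
  -- support of coefficients of V^s mod p
  have hfrobV : ∀ s n : ℕ, ¬ (p ∣ n + s) → PowerSeries.coeff n (V ^ s) = 0 := by
    intro s
    induction s with
    | zero =>
      intro n hn
      rw [pow_zero, PowerSeries.coeff_one]
      rcases Nat.eq_zero_or_pos n with h | h
      · subst h; simp at hn
      · rw [if_neg (by omega)]
    | succ s IH =>
      intro n hn
      rw [pow_succ', PowerSeries.coeff_mul]
      apply Finset.sum_eq_zero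
      rintro ⟨i, j⟩ hij
      rw [Finset.HasAntidiagonal.mem_antidiagonal] at hij
      by_cases hVi : PowerSeries.coeff i V = 0
      · rw [hVi, zero_mul]
      · obtain ⟨k, hk1, hik⟩ := hsupp i hVi
        have hpk := hpk3 k hk1
        have hdvd_i : p ∣ i + 1 := by
          rw [show i + 1 = p ^ k by omega]
          exact dvd_pow_self p (by omega)
        rw [IH j ?_, mul_zero]
        intro hd
        apply hn
        have heq : n + (s+1) = (i+1) + (j+s) := by omega
        rw [heq]
        exact Nat.dvd_add hdvd_i hd
  -- Frobenius property of a
  have hfrob_a : ∀ m : ℕ, a (p * m) = a m ^ p := by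
    intro m
    have himg : ∑ s ∈ (range (m+1)).image (fun s' => p * s'),
        (-1 : R)^s * PowerSeries.coeff (p*m) (V ^ s)
        = ∑ s ∈ range (p*m+1), (-1 : R)^s * PowerSeries.coeff (p*m) (V ^ s) := by
      apply Finset.sum_subset
      · intro x hx
        rw [Finset.mem_image] at hx
        obtain ⟨s', hs', rfl⟩ := hx
        rw [Finset.mem_range] at hs' ⊢
        have : p * s' ≤ p * m := Nat.mul_le_mul_left p (by omega)
        omega
      · intro x hx hxn
        by_cases hdx : p ∣ x
        · exfalso
          obtain ⟨y, rfl⟩ := hdx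
          apply hxn
          rw [Finset.mem_range] at hx
          refine Finset.mem_image.mpr ⟨y, Finset.mem_range.mpr ?_, rfl⟩
          by_contra hy
          push_neg at hy
          have h1 : p * (m+1) ≤ p * y := Nat.mul_le_mul_left p (by omega)
          have h2 : p * (m+1) = p*m + p := by ring
          omega
        · rw [hfrobV x (p*m) ?_, mul_zero]
          intro hd
          exact hdx ((Nat.dvd_add_right (Dvd.intro m rfl)).mp hd)
    have hinj : Set.InjOn (fun s' => p * s') (range (m+1)) := by
      intro x _ y _ h
      exact Nat.eq_of_mul_eq_mul_left (by omega) h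
    rw [ha]
    simp only []
    rw [← himg, Finset.sum_image hinj]
    have hterm : ∀ s' ∈ range (m+1),
        (-1 : R)^(p * s') * PowerSeries.coeff (p*m) (V ^ (p * s'))
        = ((-1 : R)^(s') * PowerSeries.coeff m (V ^ s')) ^ p := by
      intro s' _
      have hsign1 : (-1 : R)^(p*s') = (-1 : R)^(s') := by
        rw [pow_mul, hodd.neg_one_pow]
      have hsign2 : ((-1 : R)^(s'))^p = (-1 : R)^(s') := by
        rw [← pow_mul, mul_comm s' p, pow_mul, hodd.neg_one_pow]
      rw [show V ^ (p * s') = (V ^ s') ^ p by rw [mul_comm, pow_mul],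
        coeff_pow_prime_char hp (V ^ s') m, mul_pow, hsign1, hsign2]
    rw [Finset.sum_congr rfl hterm]
    simp only [← frobenius_def (R := R) (p := p)]
    rw [← map_sum (frobenius R p) (fun s' => (-1 : R)^(s') * PowerSeries.coeff m (V ^ s'))
      (range (m+1))]
  have hfrob_iter : ∀ i m : ℕ, a (p ^ i * m) = a m ^ (p ^ i) := by
    intro i
    induction i with
    | zero => intro m; simp
    | succ i IH =>
      intro m
      rw [pow_succ, mul_comm (p^i) p, mul_assoc, hfrob_a (p^i * m), IH m, ← pow_mul,
        mul_comm (p^i) p, ← pow_succ']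
  -- sparse form of the convolution sum at p^k - 1
  have hsparse : ∀ k : ℕ, 1 ≤ k → ∑ m ∈ Icc 1 (p^k - 1), t m * a (p^k - 1 - m)
      = ∑ u ∈ Icc 1 k, ξ u * a (p^k - p^u) := by
    intro k hk
    have hpk := hpk3 k hk
    have himg : ∑ m ∈ (Icc 1 k).image (fun u => p^u - 1), t m * a (p^k - 1 - m)
        = ∑ m ∈ Icc 1 (p^k - 1), t m * a (p^k - 1 - m) := by
      apply Finset.sum_subset
      · intro x hx
        rw [Finset.mem_image] at hx
        obtain ⟨u, hu, rfl⟩ := hx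
        rw [Finset.mem_Icc] at hu ⊢
        have h1 := hpk3 u hu.1
        have h2 : p^u ≤ p^k := Nat.pow_le_pow_right (by omega) hu.2
        omega
      · intro x hx hxn
        rw [ht0 x ?_, zero_mul]
        intro k' hk' hxk'
        apply hxn
        rw [Finset.mem_Icc] at hx
        have h1 := hpk3 k' hk'
        refine Finset.mem_image.mpr ⟨k', Finset.mem_Icc.mpr ⟨hk', ?_⟩, hxk'.symm⟩
        by_contra hbad
        push_neg at hbad
        have : p^(k+1) ≤ p^k' := Nat.pow_le_pow_right (by omega) (by omega)
        have : p^k < p^(k+1) := Nat.pow_lt_pow_right (by omega) (by omega)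
        omega
    have hinj : Set.InjOn (fun u => p^u - 1) (Icc 1 k) := by
      intro x hx y hy h
      simp only [Finset.coe_Icc, Set.mem_Icc] at hx hy
      have h' : p ^ x - 1 = p ^ y - 1 := h
      have hx1 := hpk3 x hx.1
      have hy1 := hpk3 y hy.1
      have : p ^ x = p ^ y := by omega
      exact Nat.pow_right_injective (by omega) this
    rw [← himg, Finset.sum_image hinj]
    refine Finset.sum_congr rfl fun u hu => ?_
    rw [Finset.mem_Icc] at hu
    have h1 := hpk3 u hu.1
    have h2 : p^u ≤ p^k := Nat.pow_le_pow_right (by omega) hu.2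
    rw [ht1 u hu.1, show p^k - 1 - (p^u - 1) = p^k - p^u by omega]
  -- main induction : a (p^k - 1) = ξbar k
  have hmain : ∀ k : ℕ, a (p^k - 1) = ξbar k := by
    intro k
    induction k using Nat.strong_induction_on with
    | _ k IH =>
      rcases Nat.eq_zero_or_pos k with hk0 | hk1
      · subst hk0
        simpa using ha0.trans hξbar0.symm
      · have hpk := hpk3 k hk1
        have h1 := hconv (p^k - 1) (by omega)
        rw [hsparse k hk1] at h1
        have h2 : ∀ u ∈ Icc 1 k, ξ u * a (p^k - p^u) = ξ u * ξbar (k-u) ^ (p^u) := by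
          intro u hu
          rw [Finset.mem_Icc] at hu
          have harith : p^k - p^u = p^u * (p^(k-u) - 1) := by
            rw [Nat.mul_sub, mul_one, ← pow_add, show u + (k-u) = k by omega]
          rw [harith, hfrob_iter u (p^(k-u) - 1), IH (k-u) (by omega)]
        rw [Finset.sum_congr rfl h2] at h1
        have h3 := swap_recursion hp ξ ξbar hξ0 hξbar0 hξbar k hk1
        rw [Finset.sum_range_succ'] at h3
        have h4 : ∑ u ∈ Icc 1 k, ξ u * ξbar (k-u) ^ (p^u)
            = ∑ j ∈ range k, ξ (j+1) * ξbar (k - (j+1)) ^ (p^(j+1)) := by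
          rw [← Finset.Ico_add_one_right_eq_Icc, Finset.sum_Ico_eq_sum_range]
          refine Finset.sum_congr (by congr 1) fun i _ => ?_
          rw [add_comm 1 i]
        rw [hξ0, pow_zero, pow_one, one_mul, Nat.sub_zero] at h3
        rw [h1, h4]
        linear_combination -h3
  -- newton sequence vs a
  have hnewton : ∀ n : ℕ, 1 ≤ n → newton t n = (-1 : R)^(n-1) * a n := by
    intro n
    induction n using Nat.strong_induction_on with
    | _ n IH =>
      intro hn
      rcases n with _ | n
      · omega
      rcases n with _ | m
      · have ha1 : a 1 = 0 := by
          rw [hconv 1 le_rfl, Finset.Icc_self, Finset.sum_singleton, ht1', zero_mul, neg_zero]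
        rw [show newton t 1 = t 1 by rw [newton], ha1, ht1', mul_zero]
      · rw [newton_succ_succ]
        have hIH : ∀ j ∈ Icc 1 (m+1), (-1 : R)^(j-1) * t j * newton t (m+2-j)
            = (-1 : R)^m * (t j * a (m+2-j)) := by
          intro j hj
          rw [Finset.mem_Icc] at hj
          rw [IH (m+2-j) (by omega) (by omega)]
          rw [show (-1 : R)^(j-1) * t j * ((-1 : R)^(m+2-j-1) * a (m+2-j))
            = ((-1 : R)^(j-1) * (-1 : R)^(m+2-j-1)) * (t j * a (m+2-j)) by ring]
          rw [← pow_add, show j - 1 + (m+2-j-1) = m by omega]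
        rw [Finset.sum_congr rfl hIH, ← Finset.mul_sum]
        have hc := hconv (m+2) (by omega)
        rw [Finset.sum_Icc_succ_top (by omega : 1 ≤ m + 2), Nat.sub_self, ha0, mul_one] at hc
        have hd := hdead (m+2)
        rw [show m+2-1 = m+1 from rfl]
        push_cast at hd ⊢
        linear_combination ((-1:R)^m) * hc + ((-1:R)^(m+1)) * hd
  -- conclusion
  intro k hk
  have hpk := hpk3 k hk
  rw [hnewton (p^k - 1) (by omega), hmain k]
  have hoddpow : Odd (p ^ k) := hodd.pow
  have hodd2 : Odd (p ^ k - 1 - 1) := by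
    obtain ⟨j, hj⟩ := hoddpow
    exact ⟨j - 1, by omega⟩
  rw [hodd2.neg_one_pow, neg_one_mul]

open MvPolynomial in
/-- In `A = 𝔽_p[ξ₁, ξ₂, …]` (formally `MvPolynomial ℕ+ (ZMod p)`, `p` an odd prime)
with `ξ 0 = 1` and `ξ k = X k` for `k ≥ 1`, let `ξbar` be the conjugates, defined by
`ξbar 0 = 1` and Milnor's antipode recursion `∑_{j=0}^k ξ (k-j) ^ (p^j) * ξbar j = 0`
for `k ≥ 1`.  Let `t n = ξ k` if `n = p^k - 1` for some `k ≥ 1` and `t n = 0`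
otherwise.  Then the Newton sequence of `t` satisfies `N (p^k - 1) = - ξbar k`
for all `k ≥ 1`. -/
theorem newton_eq_neg_conjugate_xi (p : ℕ) (hp : p.Prime) (hodd : Odd p)
    (ξ : ℕ → MvPolynomial ℕ+ (ZMod p)) (hξ0 : ξ 0 = 1)
    (hξ : ∀ k : ℕ+, ξ k = X k)
    (ξbar : ℕ → MvPolynomial ℕ+ (ZMod p)) (hξbar0 : ξbar 0 = 1)
    (hξbar : ∀ k : ℕ, 1 ≤ k →
      ∑ j ∈ Finset.range (k + 1), ξ (k - j) ^ (p ^ j) * ξbar j = 0)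
    (t : ℕ → MvPolynomial ℕ+ (ZMod p))
    (ht1 : ∀ k : ℕ, 1 ≤ k → t (p ^ k - 1) = ξ k)
    (ht0 : ∀ n : ℕ, (∀ k : ℕ, 1 ≤ k → n ≠ p ^ k - 1) → t n = 0) :
    ∀ k : ℕ, 1 ≤ k → newton t (p ^ k - 1) = - ξbar k := by
  haveI := Fact.mk hp
  exact newton_aux p hp hodd ξ hξ0 ξbar hξbar0 hξbar t ht1 ht0
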